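/- Let X be a metric space, let (ν_n) be a sequence of finite Borel measures on X and ν a finite Borel measure on X. Then the following are equivalent: (I) ν_n converges to ν in total variation, i.e., sup over all Borel-measurable f : X → [−1,1] of |∫_X f dν_n − ∫_X f dν| tends to 0 as n → ∞; (II) sup over all closed bounded sets A ⊆ X of |ν_n(A) − ν(A)| tends to 0; (III) sup over all open bounded sets B ⊆ X of |ν_n(B) − ν(B)| tends to 0. -/

import Mathlib

set_option linter.unusedSectionVars false

open MeasureTheory Filter Topology
open scoped ENNReal

namespace Stmt17Aux

variable {X : Type*} [MetricSpace X] [MeasurableSpace X] [BorelSpace X]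

lemma integrable_of_abs_le {f : X → ℝ} (hf : Measurable f) (hb : ∀ x, |f x| ≤ 1)
    (α : Measure X) [IsFiniteMeasure α] : Integrable f α :=
  (integrable_const (1 : ℝ)).mono' hf.aestronglyMeasurable
    (Filter.Eventually.of_forall fun x => by simpa using hb x)

lemma toReal_le_toReal_univ (α : Measure X) [IsFiniteMeasure α] (A : Set X) :
    (α A).toReal ≤ (α Set.univ).toReal :=
  ENNReal.toReal_mono (measure_ne_top _ _) (measure_mono (Set.subset_univ _))

lemma abs_toReal_sub_le (α β : Measure X) [IsFiniteMeasure α] [IsFiniteMeasure β] (A : Set X) :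
    |(α A).toReal - (β A).toReal| ≤ (α Set.univ).toReal + (β Set.univ).toReal := by
  have h1 := toReal_le_toReal_univ α A
  have h2 := toReal_le_toReal_univ β A
  have h3 : 0 ≤ (α A).toReal := ENNReal.toReal_nonneg
  have h4 : 0 ≤ (β A).toReal := ENNReal.toReal_nonneg
  rw [abs_le]; constructor <;> linarith

lemma abs_toReal_sub_toReal_le (α : Measure X) [IsFiniteMeasure α] (A S : Set X) :
    |(α A).toReal - (α S).toReal| ≤ (α (A \ S)).toReal + (α (S \ A)).toReal := by
  have key : ∀ B C : Set X, (α B).toReal ≤ (α C).toReal + (α (B \ C)).toReal := by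
    intro B C
    have hsub : B ⊆ C ∪ (B \ C) := by
      intro x hx
      by_cases h : x ∈ C
      · exact Set.mem_union_left _ h
      · exact Set.mem_union_right _ ⟨hx, h⟩
    have h1 : α B ≤ α C + α (B \ C) := le_trans (measure_mono hsub) (measure_union_le _ _)
    calc (α B).toReal ≤ (α C + α (B \ C)).toReal :=
          ENNReal.toReal_mono (by finiteness) h1
      _ = (α C).toReal + (α (B \ C)).toReal :=
          ENNReal.toReal_add (measure_ne_top _ _) (measure_ne_top _ _)
  have h1 := key A S
  have h2 := key S A
  have h3 : (0:ℝ) ≤ (α (A \ S)).toReal := ENNReal.toReal_nonneg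
  have h4 : (0:ℝ) ≤ (α (S \ A)).toReal := ENNReal.toReal_nonneg
  rw [abs_le]; constructor <;> linarith

lemma abs_setIntegral_sub_le (α β : Measure X) [IsFiniteMeasure α] [IsFiniteMeasure β]
    {E : Set X} (hE : MeasurableSet E)
    (h : ∀ t, MeasurableSet t → t ⊆ E → β t ≤ α t)
    {f : X → ℝ} (hf : Measurable f) (hb : ∀ x, |f x| ≤ 1) :
    |∫ x in E, f x ∂α - ∫ x in E, f x ∂β| ≤ (α E).toReal - (β E).toReal := by
  have hle : β.restrict E ≤ α.restrict E := by
    refine Measure.le_iff.2 fun s hs => ?_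
    rw [Measure.restrict_apply hs, Measure.restrict_apply hs]
    exact h _ (hs.inter hE) Set.inter_subset_right
  set ρ := α.restrict E - β.restrict E with hρ
  have hcancel : ρ + β.restrict E = α.restrict E := Measure.sub_add_cancel_of_le hle
  haveI : IsFiniteMeasure ρ := isFiniteMeasure_of_le (α.restrict E) Measure.sub_le
  have hint : ∫ x in E, f x ∂α = ∫ x, f x ∂ρ + ∫ x in E, f x ∂β := by
    rw [← hcancel,
      integral_add_measure (integrable_of_abs_le hf hb ρ) (integrable_of_abs_le hf hb _)]
  have hEq : ρ Set.univ + β E = α E := by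
    have h2 := congrArg (fun m : Measure X => m Set.univ) hcancel
    simpa [Measure.restrict_apply_univ] using h2
  have hto : (ρ Set.univ).toReal + (β E).toReal = (α E).toReal := by
    rw [← ENNReal.toReal_add (measure_ne_top _ _) (measure_ne_top _ _), hEq]
  have hnorm : |∫ x, f x ∂ρ| ≤ (ρ Set.univ).toReal := by
    have h3 := norm_integral_le_of_norm_le_const (μ := ρ) (f := f) (C := 1)
      (Filter.Eventually.of_forall fun x => by simpa using hb x)
    simpa [Measure.real] using h3
  have hdiff : ∫ x in E, f x ∂α - ∫ x in E, f x ∂β = ∫ x, f x ∂ρ := by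
    rw [hint]; ring
  rw [hdiff]; linarith

/-- sup over measurable sets -/
noncomputable def DM (α β : Measure X) : ℝ :=
  ⨆ A : {s : Set X // MeasurableSet s}, |(α A.1).toReal - (β A.1).toReal|

lemma bddAbove_DM (α β : Measure X) [IsFiniteMeasure α] [IsFiniteMeasure β] :
    BddAbove (Set.range fun A : {s : Set X // MeasurableSet s} =>
      |(α A.1).toReal - (β A.1).toReal|) :=
  ⟨(α Set.univ).toReal + (β Set.univ).toReal, by
    rintro _ ⟨A, rfl⟩; exact abs_toReal_sub_le α β A.1⟩

lemma le_DM (α β : Measure X) [IsFiniteMeasure α] [IsFiniteMeasure β] {A : Set X}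
    (hA : MeasurableSet A) : |(α A).toReal - (β A).toReal| ≤ DM α β :=
  le_ciSup (bddAbove_DM α β) ⟨A, hA⟩

lemma abs_integral_sub_le_two_DM (α β : Measure X) [IsFiniteMeasure α] [IsFiniteMeasure β]
    {f : X → ℝ} (hf : Measurable f) (hb : ∀ x, |f x| ≤ 1) :
    |∫ x, f x ∂α - ∫ x, f x ∂β| ≤ 2 * DM α β := by
  obtain ⟨E, hE, h1, h2⟩ := hahn_decomposition (μ := α) (ν := β)
  have hsα : ∫ x, f x ∂α = ∫ x in E, f x ∂α + ∫ x in Eᶜ, f x ∂α :=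
    (integral_add_compl hE (integrable_of_abs_le hf hb α)).symm
  have hsβ : ∫ x, f x ∂β = ∫ x in E, f x ∂β + ∫ x in Eᶜ, f x ∂β :=
    (integral_add_compl hE (integrable_of_abs_le hf hb β)).symm
  have hEb := abs_setIntegral_sub_le α β hE h1 hf hb
  have hEc := abs_setIntegral_sub_le β α hE.compl (fun t ht hts => h2 t ht hts) hf hb
  have b1 : |∫ x in E, f x ∂α - ∫ x in E, f x ∂β| ≤ DM α β := by
    refine le_trans hEb (le_trans (le_abs_self _) (le_DM α β hE))
  have b2 : |∫ x in Eᶜ, f x ∂α - ∫ x in Eᶜ, f x ∂β| ≤ DM α β := by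
    rw [abs_sub_comm]
    refine le_trans hEc (le_trans (le_abs_self _) ?_)
    rw [abs_sub_comm]
    exact le_DM α β hE.compl
  calc |∫ x, f x ∂α - ∫ x, f x ∂β|
      = |(∫ x in E, f x ∂α - ∫ x in E, f x ∂β)
          + (∫ x in Eᶜ, f x ∂α - ∫ x in Eᶜ, f x ∂β)| := by rw [hsα, hsβ]; ring_nf
    _ ≤ |∫ x in E, f x ∂α - ∫ x in E, f x ∂β|
          + |∫ x in Eᶜ, f x ∂α - ∫ x in Eᶜ, f x ∂β| := abs_add_le _ _
    _ ≤ 2 * DM α β := by linarith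

lemma exists_diff_ball_lt (τ : Measure X) [IsFiniteMeasure τ] (x0 : X)
    {A : Set X} (hA : MeasurableSet A) {ε : ℝ≥0∞} (hε : 0 < ε) :
    ∃ n : ℕ, τ (A \ Metric.ball x0 n) < ε := by
  have hanti : Antitone (fun n : ℕ => A \ Metric.ball x0 n) := by
    intro m n hmn
    exact Set.diff_subset_diff_right (Metric.ball_subset_ball (by exact_mod_cast hmn))
  have hinter : (⋂ n : ℕ, A \ Metric.ball x0 n) = ∅ := by
    ext x
    simp only [Set.mem_iInter, Set.mem_diff, Metric.mem_ball, Set.mem_empty_iff_false, iff_false,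
      not_forall]
    obtain ⟨n, hn⟩ := exists_nat_gt (dist x x0)
    exact ⟨n, fun hx => absurd hn (by tauto)⟩
  have ht := tendsto_measure_iInter_atTop (μ := τ)
    (fun n => (hA.diff measurableSet_ball).nullMeasurableSet) hanti ⟨0, measure_ne_top _ _⟩
  rw [hinter, measure_empty] at ht
  exact (ht.eventually_lt_const hε).exists

lemma exists_closed_bounded_approx (τ : Measure X) [IsFiniteMeasure τ]
    {A : Set X} (hA : MeasurableSet A) {ε : ℝ} (hε : 0 < ε) :
    ∃ F : Set X, IsClosed F ∧ Bornology.IsBounded F ∧ (τ (A \ F)).toReal < ε ∧ F ⊆ A := by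
  rcases isEmpty_or_nonempty X with h | h
  · refine ⟨∅, isClosed_empty, Bornology.isBounded_empty, ?_, Set.empty_subset _⟩
    have hA0 : A = ∅ := Set.eq_empty_of_isEmpty A
    simp [hA0, hε]
  · set ε2 : ℝ≥0∞ := ENNReal.ofReal (ε / 2) with hε2def
    have hε2 : ε2 ≠ 0 := by
      simp only [hε2def, ne_eq, ENNReal.ofReal_eq_zero, not_le]; linarith
    obtain ⟨F, hFA, hFc, hFlt⟩ := hA.exists_isClosed_diff_lt (μ := τ) (measure_ne_top _ _) hε2
    obtain ⟨x0⟩ := h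
    obtain ⟨n, hn⟩ := exists_diff_ball_lt τ x0 hFc.measurableSet (pos_iff_ne_zero.2 hε2)
    refine ⟨F ∩ Metric.closedBall x0 n, hFc.inter Metric.isClosed_closedBall,
      Metric.isBounded_closedBall.subset Set.inter_subset_right, ?_,
      Set.inter_subset_left.trans hFA⟩
    have hsub : A \ (F ∩ Metric.closedBall x0 n) ⊆ (A \ F) ∪ (F \ Metric.ball x0 n) := by
      intro x hx
      by_cases hxF : x ∈ F
      · refine Set.mem_union_right _ ⟨hxF, fun hxb => hx.2 ⟨hxF, Metric.ball_subset_closedBall hxb⟩⟩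
      · exact Set.mem_union_left _ ⟨hx.1, hxF⟩
    have hlt : τ (A \ (F ∩ Metric.closedBall x0 n)) < ENNReal.ofReal ε := by
      calc τ (A \ (F ∩ Metric.closedBall x0 n))
          ≤ τ (A \ F) + τ (F \ Metric.ball x0 n) :=
            le_trans (measure_mono hsub) (measure_union_le _ _)
        _ < ε2 + ε2 := ENNReal.add_lt_add hFlt hn
        _ = ENNReal.ofReal ε := by
            rw [hε2def, ← ENNReal.ofReal_add (by linarith) (by linarith)]
            norm_num
    exact ENNReal.toReal_lt_of_lt_ofReal hlt

lemma exists_open_bounded_approx (τ : Measure X) [IsFiniteMeasure τ]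
    {A : Set X} (hA : MeasurableSet A) {ε : ℝ} (hε : 0 < ε) :
    ∃ U : Set X, IsOpen U ∧ Bornology.IsBounded U ∧ (τ (A \ U)).toReal < ε ∧
      (τ (U \ A)).toReal < ε := by
  rcases isEmpty_or_nonempty X with h | h
  · refine ⟨∅, isOpen_empty, Bornology.isBounded_empty, ?_, ?_⟩ <;>
      simp [Set.eq_empty_of_isEmpty (A : Set X), Set.eq_empty_of_isEmpty ((∅ : Set X) \ A), hε]
  · set ε2 : ℝ≥0∞ := ENNReal.ofReal (ε / 2) with hε2def
    have hε2 : ε2 ≠ 0 := by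
      simp only [hε2def, ne_eq, ENNReal.ofReal_eq_zero, not_le]; linarith
    have hε2' : ε2 < ENNReal.ofReal ε := by
      rw [hε2def]
      exact ENNReal.ofReal_lt_ofReal_iff hε |>.2 (by linarith)
    obtain ⟨U, hAU, hUo, hUlt⟩ := A.exists_isOpen_lt_add (μ := τ) (measure_ne_top τ A) hε2
    obtain ⟨x0⟩ := h
    obtain ⟨n, hn⟩ := exists_diff_ball_lt τ x0 hA (pos_iff_ne_zero.2 hε2)
    have hUA : τ (U \ A) < ε2 := by
      rw [measure_diff hAU hA.nullMeasurableSet (measure_ne_top _ _)]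
      exact ENNReal.sub_lt_of_lt_add (measure_mono hAU) (by rwa [add_comm] at hUlt)
    refine ⟨U ∩ Metric.ball x0 n, hUo.inter Metric.isOpen_ball,
      Metric.isBounded_ball.subset Set.inter_subset_right, ?_, ?_⟩
    · have hsub : A \ (U ∩ Metric.ball x0 n) ⊆ A \ Metric.ball x0 n := by
        intro x hx
        exact ⟨hx.1, fun hb => hx.2 ⟨hAU hx.1, hb⟩⟩
      exact ENNReal.toReal_lt_of_lt_ofReal
        (lt_trans (lt_of_le_of_lt (measure_mono hsub) hn) hε2')
    · have hsub : (U ∩ Metric.ball x0 n) \ A ⊆ U \ A :=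
        Set.diff_subset_diff_left Set.inter_subset_left
      exact ENNReal.toReal_lt_of_lt_ofReal
        (lt_trans (lt_of_le_of_lt (measure_mono hsub) hUA) hε2')

lemma abs_pair_le (α β : Measure X) [IsFiniteMeasure α] [IsFiniteMeasure β] (A S : Set X) :
    |(α A).toReal - (β A).toReal| ≤ |(α S).toReal - (β S).toReal|
      + ((α (A \ S)).toReal + (α (S \ A)).toReal
        + (β (A \ S)).toReal + (β (S \ A)).toReal) := by
  have h1 := abs_toReal_sub_toReal_le α A S
  have h2 := abs_toReal_sub_toReal_le β A S
  have h3 := le_abs_self ((α S).toReal - (β S).toReal)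
  have h4 := neg_abs_le ((α S).toReal - (β S).toReal)
  rw [abs_le] at h1 h2
  rw [abs_le]
  constructor <;> [linarith [h1.1, h2.2]; linarith [h1.2, h2.1]]

noncomputable def DI (α β : Measure X) : ℝ :=
  ⨆ f : {f : X → ℝ // Measurable f ∧ ∀ x, f x ∈ Set.Icc (-1 : ℝ) 1},
    |∫ x, f.1 x ∂α - ∫ x, f.1 x ∂β|

noncomputable def DC (α β : Measure X) : ℝ :=
  ⨆ A : {s : Set X // IsClosed s ∧ Bornology.IsBounded s},
    |(α (A : Set X)).toReal - (β (A : Set X)).toReal|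

noncomputable def DO (α β : Measure X) : ℝ :=
  ⨆ B : {s : Set X // IsOpen s ∧ Bornology.IsBounded s},
    |(α (B : Set X)).toReal - (β (B : Set X)).toReal|

instance : Nonempty {f : X → ℝ // Measurable f ∧ ∀ x, f x ∈ Set.Icc (-1 : ℝ) 1} :=
  ⟨⟨fun _ => 0, measurable_const, fun _ => ⟨by norm_num, by norm_num⟩⟩⟩

instance : Nonempty {s : Set X // IsClosed s ∧ Bornology.IsBounded s} :=
  ⟨⟨∅, isClosed_empty, Bornology.isBounded_empty⟩⟩

instance : Nonempty {s : Set X // IsOpen s ∧ Bornology.IsBounded s} :=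
  ⟨⟨∅, isOpen_empty, Bornology.isBounded_empty⟩⟩

lemma abs_le_one_of_mem_Icc {f : X → ℝ} (hb : ∀ x, f x ∈ Set.Icc (-1 : ℝ) 1) (x : X) :
    |f x| ≤ 1 := abs_le.2 ⟨(hb x).1, (hb x).2⟩

lemma bddAbove_DI (α β : Measure X) [IsFiniteMeasure α] [IsFiniteMeasure β] :
    BddAbove (Set.range fun f : {f : X → ℝ // Measurable f ∧ ∀ x, f x ∈ Set.Icc (-1 : ℝ) 1} =>
      |∫ x, f.1 x ∂α - ∫ x, f.1 x ∂β|) := by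
  refine ⟨(α Set.univ).toReal + (β Set.univ).toReal, ?_⟩
  rintro _ ⟨f, rfl⟩
  have h1 : ‖∫ x, f.1 x ∂α‖ ≤ 1 * (α Set.univ).toReal :=
    norm_integral_le_of_norm_le_const
      (Filter.Eventually.of_forall fun x => by simpa using abs_le_one_of_mem_Icc f.2.2 x)
  have h2 : ‖∫ x, f.1 x ∂β‖ ≤ 1 * (β Set.univ).toReal :=
    norm_integral_le_of_norm_le_const
      (Filter.Eventually.of_forall fun x => by simpa using abs_le_one_of_mem_Icc f.2.2 x)
  rw [Real.norm_eq_abs] at h1 h2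
  calc |∫ x, f.1 x ∂α - ∫ x, f.1 x ∂β| ≤ |∫ x, f.1 x ∂α| + |∫ x, f.1 x ∂β| := abs_sub _ _
    _ ≤ (α Set.univ).toReal + (β Set.univ).toReal := by linarith

lemma bddAbove_DC (α β : Measure X) [IsFiniteMeasure α] [IsFiniteMeasure β] :
    BddAbove (Set.range fun A : {s : Set X // IsClosed s ∧ Bornology.IsBounded s} =>
      |(α (A : Set X)).toReal - (β (A : Set X)).toReal|) :=
  ⟨(α Set.univ).toReal + (β Set.univ).toReal, by
    rintro _ ⟨A, rfl⟩; exact abs_toReal_sub_le α β A.1⟩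

lemma bddAbove_DO (α β : Measure X) [IsFiniteMeasure α] [IsFiniteMeasure β] :
    BddAbove (Set.range fun B : {s : Set X // IsOpen s ∧ Bornology.IsBounded s} =>
      |(α (B : Set X)).toReal - (β (B : Set X)).toReal|) :=
  ⟨(α Set.univ).toReal + (β Set.univ).toReal, by
    rintro _ ⟨B, rfl⟩; exact abs_toReal_sub_le α β B.1⟩

/-- indicators show that set sups are below the functional sup -/
lemma abs_measure_sub_le_DI (α β : Measure X) [IsFiniteMeasure α] [IsFiniteMeasure β]
    {A : Set X} (hA : MeasurableSet A) :
    |(α A).toReal - (β A).toReal| ≤ DI α β := by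
  have hfm : Measurable (A.indicator (1 : X → ℝ)) := measurable_one.indicator hA
  have hbx : ∀ x, A.indicator (1 : X → ℝ) x ∈ Set.Icc (-1 : ℝ) 1 := by
    intro x
    by_cases h : x ∈ A <;>
      simp [Set.indicator_of_mem, Set.indicator_of_notMem, h]
  have key := le_ciSup (bddAbove_DI α β) ⟨A.indicator (1 : X → ℝ), hfm, hbx⟩
  simpa [integral_indicator_one hA, Measure.real, DI] using key

lemma DC_le_DI (α β : Measure X) [IsFiniteMeasure α] [IsFiniteMeasure β] : DC α β ≤ DI α β :=
  ciSup_le fun A => abs_measure_sub_le_DI α β A.2.1.measurableSet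

lemma DO_le_DI (α β : Measure X) [IsFiniteMeasure α] [IsFiniteMeasure β] : DO α β ≤ DI α β :=
  ciSup_le fun B => abs_measure_sub_le_DI α β B.2.1.measurableSet

lemma meas_le_add (α β : Measure X) [IsFiniteMeasure α] [IsFiniteMeasure β] (s : Set X) :
    (α s).toReal ≤ ((α + β) s).toReal := by
  refine ENNReal.toReal_mono (by finiteness) ?_
  rw [Measure.add_apply]; exact le_self_add

lemma meas_le_add' (α β : Measure X) [IsFiniteMeasure α] [IsFiniteMeasure β] (s : Set X) :
    (β s).toReal ≤ ((α + β) s).toReal := by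
  refine ENNReal.toReal_mono (by finiteness) ?_
  rw [Measure.add_apply]; exact le_add_self

lemma DM_le_DC (α β : Measure X) [IsFiniteMeasure α] [IsFiniteMeasure β] :
    DM α β ≤ DC α β := by
  refine ciSup_le fun A => le_of_forall_pos_le_add fun ε hε => ?_
  obtain ⟨F, hFc, hFb, hFlt, hFA⟩ :=
    exists_closed_bounded_approx (α + β) A.2 (show (0:ℝ) < ε / 4 by linarith)
  have hFA' : F \ A.1 = ∅ := Set.diff_eq_empty.2 hFA
  have hpair := abs_pair_le α β A.1 F
  rw [hFA'] at hpair
  have h1 : (α (A.1 \ F)).toReal ≤ ((α + β) (A.1 \ F)).toReal := meas_le_add α β _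
  have h2 : (β (A.1 \ F)).toReal ≤ ((α + β) (A.1 \ F)).toReal := meas_le_add' α β _
  have hDC : |(α F).toReal - (β F).toReal| ≤ DC α β :=
    le_ciSup (bddAbove_DC α β) ⟨F, hFc, hFb⟩
  simp only [measure_empty, ENNReal.toReal_zero] at hpair
  linarith

lemma DM_le_DO (α β : Measure X) [IsFiniteMeasure α] [IsFiniteMeasure β] :
    DM α β ≤ DO α β := by
  refine ciSup_le fun A => le_of_forall_pos_le_add fun ε hε => ?_
  obtain ⟨U, hUo, hUb, hU1, hU2⟩ :=
    exists_open_bounded_approx (α + β) A.2 (show (0:ℝ) < ε / 4 by linarith)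
  have hpair := abs_pair_le α β A.1 U
  have h1 : (α (A.1 \ U)).toReal ≤ ((α + β) (A.1 \ U)).toReal := meas_le_add α β _
  have h2 : (β (A.1 \ U)).toReal ≤ ((α + β) (A.1 \ U)).toReal := meas_le_add' α β _
  have h3 : (α (U \ A.1)).toReal ≤ ((α + β) (U \ A.1)).toReal := meas_le_add α β _
  have h4 : (β (U \ A.1)).toReal ≤ ((α + β) (U \ A.1)).toReal := meas_le_add' α β _
  have hDO : |(α U).toReal - (β U).toReal| ≤ DO α β :=
    le_ciSup (bddAbove_DO α β) ⟨U, hUo, hUb⟩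
  linarith

lemma DI_le_two_DC (α β : Measure X) [IsFiniteMeasure α] [IsFiniteMeasure β] :
    DI α β ≤ 2 * DC α β := by
  refine ciSup_le fun f => ?_
  calc |∫ x, f.1 x ∂α - ∫ x, f.1 x ∂β| ≤ 2 * DM α β :=
        abs_integral_sub_le_two_DM α β f.2.1 (abs_le_one_of_mem_Icc f.2.2)
    _ ≤ 2 * DC α β := by linarith [DM_le_DC α β]

lemma DI_le_two_DO (α β : Measure X) [IsFiniteMeasure α] [IsFiniteMeasure β] :
    DI α β ≤ 2 * DO α β := by
  refine ciSup_le fun f => ?_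
  calc |∫ x, f.1 x ∂α - ∫ x, f.1 x ∂β| ≤ 2 * DM α β :=
        abs_integral_sub_le_two_DM α β f.2.1 (abs_le_one_of_mem_Icc f.2.2)
    _ ≤ 2 * DO α β := by linarith [DM_le_DO α β]

end Stmt17Aux

open Stmt17Aux in
/-- On a metric space, total-variation convergence of finite Borel measures is equivalent to
uniform convergence over closed bounded sets, and to uniform convergence over open bounded
sets. -/
theorem stmt17 {X : Type*} [MetricSpace X] [MeasurableSpace X] [BorelSpace X]
    (ν : ℕ → Measure X) (μ : Measure X)
    (hν : ∀ n, IsFiniteMeasure (ν n)) (hμ : IsFiniteMeasure μ) :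
    List.TFAE
      [Tendsto (fun n => ⨆ f : {f : X → ℝ // Measurable f ∧ ∀ x, f x ∈ Set.Icc (-1 : ℝ) 1},
          |∫ x, f.1 x ∂(ν n) - ∫ x, f.1 x ∂μ|) atTop (𝓝 0),
       Tendsto (fun n => ⨆ A : {s : Set X // IsClosed s ∧ Bornology.IsBounded s},
          |((ν n) (A : Set X)).toReal - (μ (A : Set X)).toReal|) atTop (𝓝 0),
       Tendsto (fun n => ⨆ B : {s : Set X // IsOpen s ∧ Bornology.IsBounded s},
          |((ν n) (B : Set X)).toReal - (μ (B : Set X)).toReal|) atTop (𝓝 0)] := by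
  haveI := hμ
  tfae_have 1 → 2 := fun h1 =>
    squeeze_zero (fun n => Real.iSup_nonneg fun A => abs_nonneg _)
      (fun n => by haveI := hν n; exact DC_le_DI (ν n) μ) h1
  tfae_have 1 → 3 := fun h1 =>
    squeeze_zero (fun n => Real.iSup_nonneg fun B => abs_nonneg _)
      (fun n => by haveI := hν n; exact DO_le_DI (ν n) μ) h1
  tfae_have 2 → 1 := fun h2 =>
    squeeze_zero (fun n => Real.iSup_nonneg fun f => abs_nonneg _)
      (fun n => by haveI := hν n; exact DI_le_two_DC (ν n) μ)
      (by simpa [DC] using h2.const_mul (2 : ℝ))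
  tfae_have 3 → 1 := fun h3 =>
    squeeze_zero (fun n => Real.iSup_nonneg fun f => abs_nonneg _)
      (fun n => by haveI := hν n; exact DI_le_two_DO (ν n) μ)
      (by simpa [DO] using h3.const_mul (2 : ℝ))
  tfae_finish
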